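/- Let K be a field, f ∈ K[x] an irreducible polynomial, and let p, q ∈ K[x] be coprime polynomials with q ≠ 0 defining the rational function φ = p/q. If for every root β of f (in an algebraic closure) the polynomial p − β·q is irreducible over K(β), and f is irreducible over K, then the numerator of f ∘ φ (i.e., q^{deg f} · f(p/q)) is irreducible over K. -/
import Mathlib
open Polynomial IntermediateField

private lemma capelli_aux_ne_zero (K : Type*) [Field K] (f p q : Polynomial K)
    (hf0 : f ≠ 0) (hq : q ≠ 0) (hcop : IsCoprime p q)
    (hm : ¬(p.natDegree = 0 ∧ q.natDegree = 0)) :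
    (∑ i ∈ Finset.range (f.natDegree + 1),
      C (f.coeff i) * p ^ i * q ^ (f.natDegree - i)) ≠ 0 := by
  intro hF
  set n := f.natDegree with hn
  set φ := algebraMap (Polynomial K) (RatFunc K) with hφ
  have hinj : Function.Injective φ := IsFractionRing.injective _ _
  have hQ : φ q ≠ 0 := fun h => hq (hinj (by simpa using h))
  set t : RatFunc K := φ p / φ q with ht
  -- key identity
  have key : (aeval t f) * (φ q) ^ n = φ (∑ i ∈ Finset.range (n + 1),
      C (f.coeff i) * p ^ i * q ^ (n - i)) := by
    rw [aeval_eq_sum_range, Finset.sum_mul, map_sum]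
    apply Finset.sum_congr rfl
    intro i hi
    have hi' : i ≤ n := Nat.lt_succ_iff.mp (Finset.mem_range.mp hi)
    have hsplit : (φ q) ^ n = (φ q) ^ i * (φ q) ^ (n - i) := by
      rw [← pow_add]; congr 1; omega
    have hC : algebraMap K (RatFunc K) (f.coeff i) = φ (C (f.coeff i)) :=
      (IsScalarTower.algebraMap_apply K (Polynomial K) (RatFunc K) _).trans
        (by rw [Polynomial.algebraMap_eq])
    rw [map_mul, map_mul, map_pow, map_pow, Algebra.smul_def, hC, hsplit, ht, div_pow,
      mul_assoc, ← mul_assoc ((φ p)^i / (φ q)^i),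
      div_mul_cancel₀ _ (pow_ne_zero i hQ), mul_assoc]
  rw [hF, map_zero] at key
  have htf : aeval t f = 0 := by
    rcases mul_eq_zero.mp key with h | h
    · exact h
    · exact absurd h (pow_ne_zero n hQ)
  have hint : IsIntegral (Polynomial K) t :=
    (IsAlgebraic.isIntegral ⟨f, hf0, htf⟩).tower_top
  obtain ⟨h, hh⟩ := IsIntegrallyClosed.isIntegral_iff.mp hint
  have hcomp : φ (f.comp h) = 0 := by
    rw [show f.comp h = aeval h f by
      simp [Polynomial.comp, Polynomial.aeval_def, Polynomial.algebraMap_eq],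
      ← aeval_algebraMap_apply, hh, htf]
  have hcomp0 : f.comp h = 0 := hinj (by simpa using hcomp)
  rcases comp_eq_zero_iff.mp hcomp0 with h0 | ⟨_, hhc⟩
  · exact hf0 h0
  · -- h = C b, so p = C b * q
    set b := h.coeff 0
    have hpt : φ p = φ (C b * q) := by
      rw [map_mul, ← hhc, hh, ht, div_mul_cancel₀ _ hQ]
    have hpq : p = C b * q := hinj hpt
    have hqunit : IsUnit q := hcop.isUnit_of_dvd' ⟨C b, by rw [hpq]; ring⟩ dvd_rfl
    have hdq : q.natDegree = 0 := natDegree_eq_zero_of_isUnit hqunit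
    have hdp : p.natDegree = 0 := by
      rw [hpq]
      apply Nat.le_antisymm _ (Nat.zero_le _)
      calc (C b * q).natDegree ≤ (C b).natDegree + q.natDegree := natDegree_mul_le
        _ = 0 := by rw [natDegree_C, hdq]
    exact hm ⟨hdp, hdq⟩

/-- Capelli's lemma for rational functions. Let `K` be a field,
`f ∈ K[x]` irreducible, and `p, q ∈ K[x]` coprime with `q ≠ 0`, defining `φ = p/q`.
If for every root `β` of `f` in an algebraic closure the polynomial `p − β·q` is
irreducible over `K(β)`, then the numerator `q^{deg f}·f(p/q)` of `f ∘ φ`, namely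
`∑ i, (coeff f i)·p^i·q^{deg f − i}`, is irreducible over `K`. -/
theorem capelli_rational
    (K : Type*) [Field K] (f p q : Polynomial K)
    (hf : Irreducible f) (hq : q ≠ 0) (hcop : IsCoprime p q)
    (hroots : ∀ β : AlgebraicClosure K, aeval β f = 0 →
      Irreducible (p.map (algebraMap K K⟮β⟯) -
        C (AdjoinSimple.gen K β) * q.map (algebraMap K K⟮β⟯))) :
    Irreducible (∑ i ∈ Finset.range (f.natDegree + 1),
      C (f.coeff i) * p ^ i * q ^ (f.natDegree - i)) := by
  set n := f.natDegree with hn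
  set F := ∑ i ∈ Finset.range (n + 1), C (f.coeff i) * p ^ i * q ^ (n - i) with hFdef
  have hfne : f ≠ 0 := hf.ne_zero
  have hdegf : f.degree ≠ 0 := by
    rw [degree_eq_natDegree hfne]
    simpa using hf.natDegree_pos.ne'
  obtain ⟨β, hβ⟩ := IsAlgClosed.exists_aeval_eq_zero (AlgebraicClosure K) f hdegf
  have hgirr := hroots β hβ
  set ι := algebraMap K ↥K⟮β⟯ with hι
  set g := p.map ι - C (AdjoinSimple.gen K β) * q.map ι with hgdef
  have hg0 : g ≠ 0 := hgirr.ne_zero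
  have hιinj : Function.Injective ι := (algebraMap K ↥K⟮β⟯).injective
  -- not both constant
  have hm : ¬(p.natDegree = 0 ∧ q.natDegree = 0) := by
    rintro ⟨hp0, hq0⟩
    obtain ⟨a, ha⟩ := natDegree_eq_zero.mp hp0
    obtain ⟨c, hc⟩ := natDegree_eq_zero.mp hq0
    have : g = C (ι a - AdjoinSimple.gen K β * ι c) := by
      rw [hgdef, ← ha, ← hc, map_C, map_C, ← C_mul, ← C_sub]
    exact not_irreducible_C _ (this ▸ hgirr)
  -- root α of g
  have hdegg : g.degree ≠ 0 := fun h => hgirr.not_isUnit (isUnit_iff_degree_eq_zero.mpr h)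
  obtain ⟨α, hα⟩ := IsAlgClosed.exists_aeval_eq_zero (AlgebraicClosure K) g hdegg
  have hgα : aeval α p = β * aeval α q := by
    rw [hgdef, map_sub, map_mul, aeval_C, aeval_map_algebraMap, aeval_map_algebraMap,
      AdjoinSimple.algebraMap_gen] at hα
    exact sub_eq_zero.mp hα
  have hqα : aeval α q ≠ 0 := by
    intro h0
    obtain ⟨u, v, huv⟩ := hcop
    have h1 := congrArg (aeval α) huv
    simp [map_add, map_mul, h0, hgα] at h1
  -- F(α) = 0
  have hFα : aeval α F = 0 := by
    rw [hFdef, map_sum]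
    have step : ∀ i ∈ Finset.range (n + 1),
        aeval α (C (f.coeff i) * p ^ i * q ^ (n - i)) =
          algebraMap K (AlgebraicClosure K) (f.coeff i) * β ^ i * (aeval α q) ^ n := by
      intro i hi
      have hi' : i ≤ n := Nat.lt_succ_iff.mp (Finset.mem_range.mp hi)
      have hpow : (aeval α q) ^ i * (aeval α q) ^ (n - i) = (aeval α q) ^ n := by
        rw [← pow_add]; congr 1; omega
      rw [map_mul, map_mul, map_pow, map_pow, aeval_C, hgα, mul_pow, ← hpow]
      ring
    rw [Finset.sum_congr rfl step, ← Finset.sum_mul]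
    have : ∑ i ∈ Finset.range (n + 1),
        algebraMap K (AlgebraicClosure K) (f.coeff i) * β ^ i = aeval β f := by
      rw [aeval_eq_sum_range]
      exact Finset.sum_congr rfl fun i _ => by rw [Algebra.smul_def]
    rw [this, hβ, zero_mul]
  -- integrality
  have hαint : IsIntegral K α := Algebra.IsIntegral.isIntegral α
  have hβint : IsIntegral K β := Algebra.IsIntegral.isIntegral β
  have hαLint : IsIntegral (↥K⟮β⟯) α := hαint.tower_top
  -- finrank K L = n
  have hfL : Module.finrank K ↥K⟮β⟯ = n := by
    rw [adjoin.finrank hβint, ← minpoly.eq_of_irreducible hf hβ,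
      natDegree_mul hfne (fun h => (inv_ne_zero (leadingCoeff_ne_zero.mpr hfne)) (by
        simpa using congrArg (fun r => coeff r 0) h)), natDegree_C, add_zero]
  -- finrank L L⟮α⟯ = g.natDegree
  have hgL : Module.finrank (↥K⟮β⟯) (↥(adjoin (↥K⟮β⟯) {α})) = g.natDegree := by
    rw [adjoin.finrank hαLint, ← minpoly.eq_of_irreducible hgirr hα,
      natDegree_mul hg0 (fun h => (inv_ne_zero (leadingCoeff_ne_zero.mpr hg0)) (by
        simpa using congrArg (fun r => coeff r 0) h)), natDegree_C, add_zero]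
  -- β ∈ K⟮α⟯
  have hβmem : β ∈ K⟮α⟯ := by
    have h1 : aeval α p ∈ K⟮α⟯ :=
      algebra_adjoin_le_adjoin K {α} (Polynomial.aeval_mem_adjoin_singleton K α)
    have h2 : aeval α q ∈ K⟮α⟯ :=
      algebra_adjoin_le_adjoin K {α} (Polynomial.aeval_mem_adjoin_singleton K α)
    have : β = aeval α p * (aeval α q)⁻¹ := by
      rw [hgα, mul_inv_cancel_right₀ hqα]
    rw [this]
    exact mul_mem h1 (inv_mem h2)
  -- K⟮α⟯ = restrictScalars K L⟮α⟯
  have hKαL : restrictScalars K (adjoin (↥K⟮β⟯) {α}) = K⟮α⟯ := by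
    rw [adjoin_adjoin_left]
    apply le_antisymm
    · rw [adjoin_le_iff]
      rintro x hx
      rcases hx with hx | hx
      · rw [Set.mem_singleton_iff] at hx; rw [hx]; exact hβmem
      · rw [Set.mem_singleton_iff] at hx; rw [hx]; exact mem_adjoin_simple_self K α
    · exact adjoin.mono K {α} ({β} ∪ {α}) Set.subset_union_right
  -- minpoly degree
  have hmindeg : (minpoly K α).natDegree = n * g.natDegree := by
    rw [← adjoin.finrank hαint, ← hKαL]
    have htower := Module.finrank_mul_finrank K (↥K⟮β⟯) (↥(adjoin (↥K⟮β⟯) {α}))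
    rw [hfL, hgL] at htower
    rw [htower]
    rfl
  -- degree bound over max
  have hbound : F.natDegree ≤ n * max p.natDegree q.natDegree := by
    apply natDegree_sum_le_of_forall_le
    intro i hi
    have hi' : i ≤ n := Nat.lt_succ_iff.mp (Finset.mem_range.mp hi)
    calc (C (f.coeff i) * p ^ i * q ^ (n - i)).natDegree
        ≤ (C (f.coeff i) * p ^ i).natDegree + (q ^ (n - i)).natDegree := natDegree_mul_le
      _ ≤ (C (f.coeff i)).natDegree + (p ^ i).natDegree + (q ^ (n - i)).natDegree :=
          Nat.add_le_add_right natDegree_mul_le _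
      _ = i * p.natDegree + (n - i) * q.natDegree := by
          rw [natDegree_C, natDegree_pow, natDegree_pow, zero_add]
      _ ≤ i * max p.natDegree q.natDegree + (n - i) * max p.natDegree q.natDegree :=
          Nat.add_le_add (Nat.mul_le_mul_left _ (le_max_left _ _))
            (Nat.mul_le_mul_left _ (le_max_right _ _))
      _ = (i + (n - i)) * max p.natDegree q.natDegree := (Nat.add_mul _ _ _).symm
      _ = n * max p.natDegree q.natDegree := by congr 1; omega
  have hdegF : F.natDegree ≤ n * g.natDegree := by
    obtain ⟨m, hmdef⟩ : ∃ m, m = max p.natDegree q.natDegree := ⟨_, rfl⟩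
    rw [← hmdef] at hbound
    rcases le_or_gt m g.natDegree with hcase | hcase
    · exact hbound.trans (Nat.mul_le_mul_left _ hcase)
    · -- degenerate case: cancellation in the leading coefficient, forces deg f = 1
      have hgm : g.coeff m = 0 := coeff_eq_zero_of_natDegree_lt hcase
      have hgm' : ι (p.coeff m) - AdjoinSimple.gen K β * ι (q.coeff m) = 0 := by
        rw [hgdef] at hgm
        simpa [coeff_map] using hgm
      have hqm : q.coeff m ≠ 0 := by
        intro h0
        have hpm : p.coeff m = 0 := by
          have h1 : ι (p.coeff m) = 0 := by
            rw [h0, map_zero, mul_zero, sub_zero] at hgm'; exact hgm'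
          exact hιinj (by rw [h1, map_zero])
        rcases max_choice p.natDegree q.natDegree with hmax | hmax
        · rw [← hmdef] at hmax
          rw [hmax, coeff_natDegree] at hpm
          have hp0 : p = 0 := leadingCoeff_eq_zero.mp hpm
          have hdp : p.natDegree = 0 := by rw [hp0, natDegree_zero]
          have hdq : q.natDegree = 0 := by
            have h2 := le_max_right p.natDegree q.natDegree
            rw [← hmdef, hmax, hdp] at h2
            omega
          exact hm ⟨hdp, hdq⟩
        · rw [← hmdef] at hmax
          rw [hmax, coeff_natDegree] at h0
          exact leadingCoeff_ne_zero.mpr hq h0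
      have hqm' : ι (q.coeff m) ≠ 0 := fun h => hqm (hιinj (by rw [h, map_zero]))
      have hgen : AdjoinSimple.gen K β = ι (p.coeff m / q.coeff m) := by
        rw [map_div₀, eq_div_iff hqm']
        exact (sub_eq_zero.mp hgm').symm
      set b := p.coeff m / q.coeff m with hbdef
      have hβb : β = algebraMap K (AlgebraicClosure K) b := by
        have h2 := congrArg (algebraMap (↥K⟮β⟯) (AlgebraicClosure K)) hgen
        rwa [AdjoinSimple.algebraMap_gen, hι, ← IsScalarTower.algebraMap_apply] at h2
      have hfb : f.eval b = 0 := by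
        have h4 : aeval (algebraMap K (AlgebraicClosure K) b) f
            = algebraMap K (AlgebraicClosure K) (f.eval b) := by
          rw [aeval_algebraMap_apply]
          congr 1
        rw [← hβb, hβ] at h4
        exact (algebraMap K (AlgebraicClosure K)).injective (by rw [← h4, map_zero])
      have hn1 : n = 1 := by
        obtain ⟨k, hk⟩ := dvd_iff_isRoot.mpr hfb
        rcases hf.isUnit_or_isUnit hk with hu | hu
        · exact absurd hu (not_isUnit_X_sub_C b)
        · have hk0 : k ≠ 0 := fun h => hfne (by rw [hk, h, mul_zero])
          rw [hn, hk, natDegree_mul (X_sub_C_ne_zero b) hk0, natDegree_X_sub_C,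
            natDegree_eq_zero_of_isUnit hu]
      have hc1 : f.coeff 1 ≠ 0 := by
        have h5 := leadingCoeff_ne_zero.mpr hfne
        rwa [leadingCoeff, ← hn, hn1] at h5
      have hb0 : f.coeff 0 = -(f.coeff 1 * b) := by
        have he := hfb
        rw [eval_eq_sum_range, ← hn, hn1] at he
        simp [Finset.sum_range_succ, Finset.sum_range_one] at he
        linear_combination he
      have hFeq : F = C (f.coeff 1) * (p - C b * q) := by
        rw [hFdef, hn1, Finset.sum_range_succ, Finset.sum_range_one]
        simp only [pow_zero, pow_one, one_mul, Nat.sub_self, Nat.sub_zero, mul_one]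
        rw [hb0, map_neg, map_mul]
        ring
      have hgeq : g = (p - C b * q).map ι := by
        rw [hgdef, Polynomial.map_sub, Polynomial.map_mul, map_C, hgen]
      rw [hFeq, hn1, one_mul, hgeq, natDegree_map, natDegree_C_mul hc1]
  -- endgame
  have hFne : F ≠ 0 := by
    rw [hFdef]; exact capelli_aux_ne_zero K f p q hfne hq hcop hm
  obtain ⟨c, hc⟩ := minpoly.dvd K α hFα
  have hminne : minpoly K α ≠ 0 := minpoly.ne_zero hαint
  have hc0 : c ≠ 0 := by rintro rfl; rw [mul_zero] at hc; exact hFne hc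
  have hcdeg : c.natDegree = 0 := by
    have h5 : (minpoly K α).natDegree + c.natDegree = F.natDegree := by
      rw [hc, natDegree_mul hminne hc0]
    have h6 : F.natDegree ≤ (minpoly K α).natDegree := by rw [hmindeg]; exact hdegF
    omega
  obtain ⟨u, hu⟩ := natDegree_eq_zero.mp hcdeg
  have hu0 : u ≠ 0 := fun h => hc0 (by rw [← hu, h, C_0])
  have hassoc : Associated (minpoly K α) F := by
    rw [hc, ← hu]
    exact ⟨(isUnit_C.mpr (isUnit_iff_ne_zero.mpr hu0)).unit, by rw [IsUnit.unit_spec]⟩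
  exact hassoc.irreducible (minpoly.irreducible hαint)
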